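/- arXiv:1110.5020 — 2 statements merged into one kernel-verified Lean document; each statement's English description precedes it below -/
import Mathlib

section
/- For any two groups G₁ and G₂, the second integral homology of their free product splits: H₂(G₁ ∗ G₂; ℤ) ≅ H₂(G₁; ℤ) × H₂(G₂; ℤ), where homology is group homology with coefficients in the trivial ℤ-representation. -/
/-! Second integral group homology `H₂(G; ℤ)`, defined as the homology in degree 2 of the
inhomogeneous bar complex `... → ℤ[G³] → ℤ[G²] → ℤ[G]` with the standard boundary maps. -/

/-- The boundary map `d₂ : ℤ[G²] → ℤ[G]`, `d₂(g, h) = h - g*h + g`. -/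
noncomputable def barD2 (G : Type*) [Group G] : ((G × G) →₀ ℤ) →ₗ[ℤ] (G →₀ ℤ) :=
  Finsupp.lift (G →₀ ℤ) ℤ (G × G) fun p =>
    Finsupp.single p.2 1 - Finsupp.single (p.1 * p.2) 1 + Finsupp.single p.1 1

/-- The boundary map `d₃ : ℤ[G³] → ℤ[G²]`,
`d₃(g, h, k) = (h, k) - (g*h, k) + (g, h*k) - (g, h)`. -/
noncomputable def barD3 (G : Type*) [Group G] : ((G × G × G) →₀ ℤ) →ₗ[ℤ] ((G × G) →₀ ℤ) :=
  Finsupp.lift ((G × G) →₀ ℤ) ℤ (G × G × G) fun t =>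
    Finsupp.single (t.2.1, t.2.2) 1 - Finsupp.single (t.1 * t.2.1, t.2.2) 1 +
      Finsupp.single (t.1, t.2.1 * t.2.2) 1 - Finsupp.single (t.1, t.2.1) 1

/-- Second group homology with coefficients in the trivial `ℤ`-representation:
`H₂(G; ℤ) = ker d₂ / im d₃`. -/
noncomputable def H2Z (G : Type*) [Group G] :=
  LinearMap.ker (barD2 G) ⧸
    (LinearMap.range (barD3 G)).comap (LinearMap.ker (barD2 G)).subtype

noncomputable instance (G : Type*) [Group G] : AddCommGroup (H2Z G) :=
  inferInstanceAs <| AddCommGroup <|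
    LinearMap.ker (barD2 G) ⧸
      (LinearMap.range (barD3 G)).comap (LinearMap.ker (barD2 G)).subtype

section infra

variable {G H K : Type*} [Group G] [Group H] [Group K]

lemma barD2_single (g h : G) : barD2 G (Finsupp.single (g, h) 1) =
    Finsupp.single h 1 - Finsupp.single (g * h) 1 + Finsupp.single g 1 := by
  simp [barD2, Finsupp.lift_apply, Finsupp.sum_single_index]

lemma barD3_single (g h k : G) : barD3 G (Finsupp.single (g, h, k) 1) =
    Finsupp.single (h, k) 1 - Finsupp.single (g * h, k) 1 +
      Finsupp.single (g, h * k) 1 - Finsupp.single (g, h) 1 := by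
  simp [barD3, Finsupp.lift_apply, Finsupp.sum_single_index]

/-- chain map in degree 1 -/
noncomputable def ch1 (f : G →* H) : (G →₀ ℤ) →ₗ[ℤ] (H →₀ ℤ) :=
  Finsupp.lmapDomain ℤ ℤ f

noncomputable def ch2 (f : G →* H) : ((G × G) →₀ ℤ) →ₗ[ℤ] ((H × H) →₀ ℤ) :=
  Finsupp.lmapDomain ℤ ℤ (Prod.map f f)

noncomputable def ch3 (f : G →* H) : ((G × G × G) →₀ ℤ) →ₗ[ℤ] ((H × H × H) →₀ ℤ) :=
  Finsupp.lmapDomain ℤ ℤ (Prod.map f (Prod.map f f))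

lemma ch2_single (f : G →* H) (g h : G) (c : ℤ) :
    ch2 f (Finsupp.single (g, h) c) = Finsupp.single (f g, f h) c := by
  simp [ch2, Finsupp.mapDomain_single]

lemma d2_comm (f : G →* H) :
    (barD2 H).comp (ch2 f) = (ch1 f).comp (barD2 G) := by
  apply Finsupp.lhom_ext'
  intro p
  apply LinearMap.ext_ring
  obtain ⟨g, h⟩ := p
  simp only [LinearMap.comp_apply, Finsupp.lsingle_apply, ch2_single, barD2_single, ch1,
    Finsupp.lmapDomain_apply, map_sub, map_add, Finsupp.mapDomain_single, map_mul]

lemma d3_comm (f : G →* H) :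
    (barD3 H).comp (ch3 f) = (ch2 f).comp (barD3 G) := by
  apply Finsupp.lhom_ext'
  intro p
  apply LinearMap.ext_ring
  obtain ⟨g, h, k⟩ := p
  simp only [LinearMap.comp_apply, Finsupp.lsingle_apply, ch3, ch2, Finsupp.lmapDomain_apply,
    Finsupp.mapDomain_single, barD3_single, map_sub, map_add, map_mul, Prod.map_apply]

lemma ch2_ker (f : G →* H) {x : (G × G) →₀ ℤ} (hx : x ∈ LinearMap.ker (barD2 G)) :
    ch2 f x ∈ LinearMap.ker (barD2 H) := by
  have := congrArg (fun L => L x) (d2_comm f)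
  simp only [LinearMap.comp_apply] at this
  simp only [LinearMap.mem_ker] at hx ⊢
  rw [this, hx, map_zero]

/-- the submodule we quotient by -/
noncomputable abbrev bSub (G : Type*) [Group G] :
    Submodule ℤ (LinearMap.ker (barD2 G)) :=
  (LinearMap.range (barD3 G)).comap (LinearMap.ker (barD2 G)).subtype

/-- induced map on kernels -/
noncomputable def kmap (f : G →* H) :
    LinearMap.ker (barD2 G) →ₗ[ℤ] LinearMap.ker (barD2 H) :=
  (ch2 f).restrict fun x hx => ch2_ker f hx

lemma kmap_sub (f : G →* H) : bSub G ≤ (bSub H).comap (kmap f) := by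
  rintro ⟨x, hx⟩ ⟨w, hw⟩
  have := congrArg (fun L => L w) (d3_comm f)
  simp only [LinearMap.comp_apply] at this
  refine ⟨ch3 f w, ?_⟩
  simp only [Submodule.coe_subtype] at hw ⊢
  rw [this, hw]
  rfl

noncomputable def H2Zmap (f : G →* H) : H2Z G →ₗ[ℤ] H2Z H :=
  Submodule.mapQ (bSub G) (bSub H) (kmap f) (kmap_sub f)

lemma H2Zmap_mk (f : G →* H) (x : LinearMap.ker (barD2 G)) :
    H2Zmap f (Submodule.Quotient.mk x) = Submodule.Quotient.mk (kmap f x) :=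
  rfl

lemma H2Zmap_comp (f : H →* K) (g : G →* H) (x : H2Z G) :
    H2Zmap f (H2Zmap g x) = H2Zmap (f.comp g) x := by
  obtain ⟨y, rfl⟩ := Submodule.Quotient.mk_surjective _ x
  rw [H2Zmap_mk, H2Zmap_mk, H2Zmap_mk]
  congr 1
  ext : 1
  show ch2 f (ch2 g y.1) = ch2 (f.comp g) y.1
  simp only [ch2]
  rw [Finsupp.lmapDomain_apply, Finsupp.lmapDomain_apply, Finsupp.lmapDomain_apply,
    ← Finsupp.mapDomain_comp]
  rfl

lemma H2Zmap_id (x : H2Z G) : H2Zmap (MonoidHom.id G) x = x := by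
  obtain ⟨y, rfl⟩ := Submodule.Quotient.mk_surjective _ x
  rw [H2Zmap_mk]
  congr 1
  ext : 1
  show ch2 (MonoidHom.id G) y.1 = y.1
  simp only [ch2]
  rw [Finsupp.lmapDomain_apply]
  have : Prod.map (MonoidHom.id G) (MonoidHom.id G) = id := rfl
  rw [this, Finsupp.mapDomain_id]

instance : Subsingleton (H2Z PUnit.{1}) := by
  have hker : ∀ x : LinearMap.ker (barD2 PUnit.{1}), x = 0 := by
    rintro ⟨x, hx⟩
    have hx' : barD2 PUnit.{1} x = 0 := hx
    have hrep : x = Finsupp.single ((), ()) (x ((), ())) := by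
      ext p
      cases p
      simp
    rw [hrep] at hx'
    have h2 : barD2 PUnit.{1} (Finsupp.single ((), ()) (x ((), ()))) =
        Finsupp.single () (x ((), ())) := by
      simp [barD2, Finsupp.lift_apply, Finsupp.sum_single_index]
    rw [h2] at hx'
    have hc := congrArg (fun v => v ()) hx'
    simp only [Finsupp.single_eq_same, Finsupp.coe_zero, Pi.zero_apply] at hc
    ext p
    obtain ⟨⟨⟩, ⟨⟩⟩ := p
    simp [hc]
  constructor
  intro a b
  obtain ⟨y, rfl⟩ := Submodule.Quotient.mk_surjective _ a
  obtain ⟨z, rfl⟩ := Submodule.Quotient.mk_surjective _ b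
  rw [hker y, hker z]

lemma H2Zmap_one (f : G →* H) (hf : f = 1) (x : H2Z G) : H2Zmap f x = 0 := by
  subst hf
  have h1 : (1 : G →* H) = (1 : PUnit.{1} →* H).comp (1 : G →* PUnit.{1}) := by ext; simp
  rw [h1, ← H2Zmap_comp]
  have h0 : H2Zmap (1 : G →* PUnit.{1}) x = 0 := Subsingleton.elim _ _
  rw [h0, map_zero]

end infra

open Monoid

universe u v

section setup

variable (G₁ : Type u) (G₂ : Type v) [Group G₁] [Group G₂]

/-- The two-element family of groups used to transfer `Coprod` to `CoprodI`. -/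
abbrev Fam : Bool → Type (max u v) := fun b => cond b (ULift.{v} G₁) (ULift.{u} G₂)

noncomputable instance famGroup : ∀ b, Group (Fam G₁ G₂ b) := fun b => by
  cases b
  · exact (inferInstance : Group (ULift.{u} G₂))
  · exact (inferInstance : Group (ULift.{v} G₁))

noncomputable def eFwd : Coprod G₁ G₂ →* CoprodI (Fam G₁ G₂) :=
  Coprod.lift
    ((CoprodI.of (M := Fam G₁ G₂) (i := true)).comp
      (MulEquiv.ulift.symm : G₁ ≃* ULift.{v} G₁).toMonoidHom)
    ((CoprodI.of (M := Fam G₁ G₂) (i := false)).comp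
      (MulEquiv.ulift.symm : G₂ ≃* ULift.{u} G₂).toMonoidHom)

noncomputable def eBwd : CoprodI (Fam G₁ G₂) →* Coprod G₁ G₂ :=
  CoprodI.lift (fun b => match b with
    | true => Coprod.inl.comp (MulEquiv.ulift : ULift.{v} G₁ ≃* G₁).toMonoidHom
    | false => Coprod.inr.comp (MulEquiv.ulift : ULift.{u} G₂ ≃* G₂).toMonoidHom)

variable {G₁ G₂}

lemma eBwd_eFwd (g : Coprod G₁ G₂) : eBwd G₁ G₂ (eFwd G₁ G₂ g) = g := by
  have h : (eBwd G₁ G₂).comp (eFwd G₁ G₂) = MonoidHom.id _ := by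
    apply Coprod.hom_ext <;> ext x <;>
      simp only [eFwd, eBwd, MonoidHom.comp_apply, Coprod.lift_apply_inl,
        Coprod.lift_apply_inr, MonoidHom.id_apply, MulEquiv.coe_toMonoidHom,
        CoprodI.lift_of] <;> rfl
  exact DFunLike.congr_fun h g

lemma eFwd_eBwd (g : CoprodI (Fam G₁ G₂)) : eFwd G₁ G₂ (eBwd G₁ G₂ g) = g := by
  have h : (eFwd G₁ G₂).comp (eBwd G₁ G₂) = MonoidHom.id _ := by
    apply CoprodI.ext_hom
    intro b
    cases b <;> ext x <;>
      simp only [eFwd, eBwd, MonoidHom.comp_apply, MonoidHom.id_apply,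
        MulEquiv.coe_toMonoidHom, CoprodI.lift_of, Coprod.lift_apply_inl,
        Coprod.lift_apply_inr] <;> rfl
  exact DFunLike.congr_fun h g

noncomputable instance : DecidableEq Bool := inferInstance
noncomputable instance (b : Bool) : DecidableEq (Fam G₁ G₂ b) := Classical.decEq _

/-- normal form word of an element -/
noncomputable def nfW (g : Coprod G₁ G₂) : CoprodI.Word (Fam G₁ G₂) :=
  CoprodI.Word.equiv (eFwd G₁ G₂ g)

/-- embedding of a letter -/
noncomputable def emb (s : Σ b, Fam G₁ G₂ b) : Coprod G₁ G₂ :=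
  eBwd G₁ G₂ (CoprodI.of s.2)

/-- products of letter lists -/
noncomputable def prodl (l : List (Σ b, Fam G₁ G₂ b)) : Coprod G₁ G₂ :=
  (l.map emb).prod

lemma equiv_prod (w : CoprodI.Word (Fam G₁ G₂)) :
    CoprodI.Word.equiv (CoprodI.Word.prod w) = w := by
  have : CoprodI.Word.prod w = (CoprodI.Word.equiv (M := Fam G₁ G₂)).symm w := rfl
  rw [this, Equiv.apply_symm_apply]

lemma eFwd_nfW (g : Coprod G₁ G₂) : CoprodI.Word.prod (nfW g) = eFwd G₁ G₂ g := by
  have : CoprodI.Word.prod (nfW g) =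
      (CoprodI.Word.equiv (M := Fam G₁ G₂)).symm (CoprodI.Word.equiv (eFwd G₁ G₂ g)) := rfl
  rw [this, Equiv.symm_apply_apply]

lemma eBwd_word_prod (w : CoprodI.Word (Fam G₁ G₂)) :
    eBwd G₁ G₂ (CoprodI.Word.prod w) = prodl w.toList := by
  rw [CoprodI.Word.prod, map_list_prod, List.map_map]
  rfl

lemma self_eq_prodl (g : Coprod G₁ G₂) : g = prodl (nfW g).toList := by
  conv_lhs => rw [← eBwd_eFwd g, ← eFwd_nfW, eBwd_word_prod]

lemma nfW_one : (nfW (1 : Coprod G₁ G₂)).toList = [] := by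
  have : nfW (1 : Coprod G₁ G₂) = CoprodI.Word.empty := by
    unfold nfW
    rw [map_one]
    have : (1 : CoprodI (Fam G₁ G₂)) = CoprodI.Word.prod CoprodI.Word.empty := by
      rw [CoprodI.Word.prod_empty]
    rw [this, equiv_prod]
  rw [this]
  rfl

lemma eq_one_of_nfW_nil (g : Coprod G₁ G₂) (h : (nfW g).toList = []) : g = 1 := by
  rw [self_eq_prodl g, h]
  rfl

lemma prodl_cons (x : Σ b, Fam G₁ G₂ b) (l : List (Σ b, Fam G₁ G₂ b)) :
    prodl (x :: l) = emb x * prodl l := by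
  rw [prodl, List.map_cons, List.prod_cons]
  rfl

/-- The tail of a reduced word is reduced and is the normal form of its product. -/
lemma nfW_tail {g : Coprod G₁ G₂} {x : Σ b, Fam G₁ G₂ b} {l : List (Σ b, Fam G₁ G₂ b)}
    (h : (nfW g).toList = x :: l) : (nfW (prodl l)).toList = l := by
  have hne : ∀ y ∈ l, Sigma.snd y ≠ 1 := fun y hy =>
    (nfW g).ne_one y (by rw [h]; exact List.mem_cons_of_mem _ hy)
  have hch : l.Chain' fun a a' => Sigma.fst a ≠ Sigma.fst a' := by
    have := (nfW g).chain_ne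
    rw [h] at this
    exact this.tail
  set tw : CoprodI.Word (Fam G₁ G₂) := ⟨l, hne, hch⟩ with htw
  have h1 : prodl l = eBwd G₁ G₂ (CoprodI.Word.prod tw) := (eBwd_word_prod tw).symm
  have h2 : nfW (prodl l) = tw := by
    rw [h1]
    unfold nfW
    rw [eFwd_eBwd, equiv_prod]
  rw [h2]

lemma eFwd_emb (x : Σ b, Fam G₁ G₂ b) : eFwd G₁ G₂ (emb x) = CoprodI.of x.2 := by
  rw [emb, eFwd_eBwd]

/-- prepending a letter to a normal form -/
lemma nfW_cons (x : Σ b, Fam G₁ G₂ b) (hx : x.2 ≠ 1) (u : Coprod G₁ G₂)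
    (hu : CoprodI.Word.fstIdx (nfW u) ≠ some x.1) :
    (nfW (emb x * u)).toList = x :: (nfW u).toList := by
  have h1 : eFwd G₁ G₂ (emb x * u) =
      CoprodI.Word.prod (CoprodI.Word.cons x.2 (nfW u) hu hx) := by
    rw [map_mul, eFwd_emb, CoprodI.Word.prod_cons, eFwd_nfW]
  have h2 : nfW (emb x * u) = CoprodI.Word.cons x.2 (nfW u) hu hx := by
    unfold nfW
    rw [h1, equiv_prod]
    rfl
  rw [h2]
  rfl

lemma emb_mul_same (b : Bool) (a c : Fam G₁ G₂ b) :
    emb ⟨b, a⟩ * emb ⟨b, c⟩ = emb ⟨b, a * c⟩ := by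
  simp only [emb, ← map_mul]

lemma emb_one (b : Bool) : emb (⟨b, 1⟩ : Σ b, Fam G₁ G₂ b) = 1 := by
  simp only [emb, map_one]

lemma emb_true (a : ULift.{v} G₁) :
    emb (⟨true, a⟩ : Σ b, Fam G₁ G₂ b) = Coprod.inl a.down := by
  simp [emb, eBwd, CoprodI.lift_of]
  rfl

lemma emb_false (a : ULift.{u} G₂) :
    emb (⟨false, a⟩ : Σ b, Fam G₁ G₂ b) = Coprod.inr a.down := by
  simp [emb, eBwd, CoprodI.lift_of]
  rfl

end setup
section core

variable {G₁ : Type u} {G₂ : Type v} [Group G₁] [Group G₂]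

/-- The quotient `ℤ[G²]/im d₃`. -/
abbrev QQ (G₁ : Type u) (G₂ : Type v) [Group G₁] [Group G₂] :=
  ((Coprod G₁ G₂ × Coprod G₁ G₂) →₀ ℤ) ⧸ LinearMap.range (barD3 (Coprod G₁ G₂))

noncomputable def mq : ((Coprod G₁ G₂ × Coprod G₁ G₂) →₀ ℤ) →ₗ[ℤ] QQ G₁ G₂ :=
  (LinearMap.range (barD3 (Coprod G₁ G₂))).mkQ

noncomputable def qp (g h : Coprod G₁ G₂) : QQ G₁ G₂ :=
  mq (Finsupp.single (g, h) 1)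

lemma rel (g h k : Coprod G₁ G₂) :
    qp g (h * k) = qp g h + qp (g * h) k - qp h k := by
  have h0 : mq (barD3 (Coprod G₁ G₂) (Finsupp.single (g, h, k) 1)) = 0 := by
    rw [mq, Submodule.mkQ_apply, Submodule.Quotient.mk_eq_zero]
    exact ⟨_, rfl⟩
  rw [barD3_single, map_sub, map_add, map_sub] at h0
  have h1 : qp g (h * k) - (qp g h + qp (g * h) k - qp h k) = 0 := by
    rw [← h0]; unfold qp; abel
  exact sub_eq_zero.mp h1

lemma q1u (u : Coprod G₁ G₂) : qp 1 u = qp (1 : Coprod G₁ G₂) 1 := by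
  have := rel (1 : Coprod G₁ G₂) 1 u
  rw [one_mul, one_mul] at this
  have h1 : qp (1 : Coprod G₁ G₂) u - qp 1 1 = 0 := by rw [this]; abel
  exact sub_eq_zero.mp h1

lemma qw1 (w : Coprod G₁ G₂) : qp w 1 = qp (1 : Coprod G₁ G₂) 1 := by
  have := rel w (1 : Coprod G₁ G₂) 1
  rw [mul_one, mul_one] at this
  have h1 : qp w 1 - qp 1 1 = 0 := by
    have h3 : qp w 1 - qp w 1 = (qp w 1 + qp w 1 - qp 1 1) - qp w 1 := by rw [← this]
    rw [sub_self] at h3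
    have h4 : (qp w 1 + qp w 1 - qp 1 1) - qp w 1 = qp w 1 - qp 1 1 := by abel
    rw [h4] at h3
    exact h3.symm
  exact sub_eq_zero.mp h1

noncomputable def Fac : Submodule ℤ (QQ G₁ G₂) :=
  (LinearMap.range (ch2 (Coprod.inl : G₁ →* Coprod G₁ G₂)) ⊔
    LinearMap.range (ch2 (Coprod.inr : G₂ →* Coprod G₁ G₂))).map mq

lemma qp11_fac : qp (1 : Coprod G₁ G₂) 1 ∈ Fac (G₁ := G₁) (G₂ := G₂) := by
  refine ⟨ch2 (Coprod.inl : G₁ →* Coprod G₁ G₂) (Finsupp.single (1, 1) 1), ?_, ?_⟩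
  · exact Submodule.mem_sup_left ⟨_, rfl⟩
  · rw [ch2_single, map_one]
    rfl

lemma qp_same_fac (b : Bool) (a c : Fam G₁ G₂ b) :
    qp (emb ⟨b, a⟩) (emb ⟨b, c⟩) ∈ Fac (G₁ := G₁) (G₂ := G₂) := by
  cases b
  · rw [emb_false, emb_false]
    refine ⟨ch2 (Coprod.inr : G₂ →* Coprod G₁ G₂) (Finsupp.single (a.down, c.down) 1),
      Submodule.mem_sup_right ⟨_, rfl⟩, ?_⟩
    rw [ch2_single]
    rfl
  · rw [emb_true, emb_true]
    refine ⟨ch2 (Coprod.inl : G₁ →* Coprod G₁ G₂) (Finsupp.single (a.down, c.down) 1),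
      Submodule.mem_sup_left ⟨_, rfl⟩, ?_⟩
    rw [ch2_single]
    rfl

noncomputable def gammaL : List (Σ b, Fam G₁ G₂ b) → QQ G₁ G₂
  | [] => 0
  | x :: t => qp (emb x) (prodl t) + gammaL t

noncomputable def bet (g : Coprod G₁ G₂) : QQ G₁ G₂ :=
  qp 1 1 - gammaL (nfW g).toList

lemma bet_one : bet (1 : Coprod G₁ G₂) = qp (1 : Coprod G₁ G₂) 1 := by
  rw [bet, nfW_one]
  show qp (1 : Coprod G₁ G₂) 1 - 0 = qp 1 1
  rw [sub_zero]

lemma bet_cons {g : Coprod G₁ G₂} {x : Σ b, Fam G₁ G₂ b} {l : List (Σ b, Fam G₁ G₂ b)}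
    (h : (nfW g).toList = x :: l) :
    bet g = bet (prodl l) - qp (emb x) (prodl l) := by
  rw [bet, bet, h, nfW_tail h, gammaL]
  abel

lemma fstIdx_nfW_one (i : Bool) :
    CoprodI.Word.fstIdx (nfW (1 : Coprod G₁ G₂)) ≠ some i := by
  rw [CoprodI.Word.fstIdx, nfW_one]
  simp

lemma nfW_letter {x : Σ b, Fam G₁ G₂ b} (hx : x.2 ≠ 1) :
    (nfW (emb x)).toList = [x] := by
  have := nfW_cons x hx 1 (fstIdx_nfW_one x.1)
  rw [mul_one, nfW_one] at this
  exact this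

lemma bet_letter {x : Σ b, Fam G₁ G₂ b} (hx : x.2 ≠ 1) : bet (emb x) = 0 := by
  rw [bet, nfW_letter hx, gammaL, gammaL]
  have h0 : prodl (G₁ := G₁) (G₂ := G₂) [] = 1 := rfl
  rw [h0, add_zero, qw1 (emb x), sub_self]

/-- the main property -/
def PP (g h : Coprod G₁ G₂) : Prop :=
  qp g h - bet h + bet (g * h) - bet g ∈ Fac (G₁ := G₁) (G₂ := G₂)

lemma main_one (h : Coprod G₁ G₂) : PP 1 h := by
  unfold PP
  have key : qp 1 h - bet h + bet (1 * h) - bet (1 : Coprod G₁ G₂) = 0 := by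
    rw [one_mul, q1u, bet_one]
    abel
  rw [key]
  exact zero_mem _

lemma main_L2 : ∀ n : ℕ, ∀ u : Coprod G₁ G₂, (nfW u).toList.length ≤ n →
    ∀ x : Σ b, Fam G₁ G₂ b, x.2 ≠ 1 → PP (emb x) u := by
  intro n
  induction n with
  | zero =>
    intro u hu x hx
    have hnil : (nfW u).toList = [] := List.length_eq_zero_iff.mp (Nat.le_zero.mp hu)
    have hu1 : u = 1 := eq_one_of_nfW_nil u hnil
    subst hu1
    unfold PP
    have key : qp (emb x) 1 - bet 1 + bet (emb x * 1) - bet (emb x) = 0 := by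
      rw [mul_one, qw1, bet_one]
      abel
    rw [key]
    exact zero_mem _
  | succ n ih =>
    intro u hu x hx
    rcases hl : (nfW u).toList with _ | ⟨y, l⟩
    · have hu1 : u = 1 := eq_one_of_nfW_nil u hl
      subst hu1
      unfold PP
      have key : qp (emb x) 1 - bet 1 + bet (emb x * 1) - bet (emb x) = 0 := by
        rw [mul_one, qw1, bet_one]
        abel
      rw [key]
      exact zero_mem _
    · -- u = emb y * v
      obtain ⟨xb, xa⟩ := x
      obtain ⟨yb, ya⟩ := y
      have hy1 : ya ≠ 1 := (nfW u).ne_one _ (by rw [hl]; exact List.mem_cons_self)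
      set v := prodl l with hv
      have hlen : (nfW v).toList.length ≤ n := by
        rw [nfW_tail hl]
        have : (nfW u).toList.length ≤ n + 1 := hu
        rw [hl] at this
        simpa using this
      have huv : u = emb ⟨yb, ya⟩ * v := by
        conv_lhs => rw [self_eq_prodl u, hl, prodl_cons]
      by_cases hbb : yb = xb
      · -- same factor
        subst hbb
        set m := xa * ya with hm
        have hxyu : emb ⟨yb, xa⟩ * u = emb ⟨yb, m⟩ * v := by
          rw [huv, ← mul_assoc, emb_mul_same]
        have hq : qp (emb ⟨yb, xa⟩) u =
            qp (emb ⟨yb, xa⟩) (emb ⟨yb, ya⟩) + qp (emb ⟨yb, m⟩) v - qp (emb ⟨yb, ya⟩) v := by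
          rw [huv, rel, emb_mul_same]
        have hBm : PP (emb ⟨yb, m⟩) v ∧
            bet (emb (⟨yb, m⟩ : Σ b, Fam G₁ G₂ b)) ∈ Fac (G₁ := G₁) (G₂ := G₂) := by
          by_cases hm1 : m = 1
          · constructor
            · rw [hm1, emb_one]
              exact main_one v
            · rw [hm1, emb_one, bet_one]
              exact qp11_fac
          · exact ⟨ih v hlen ⟨yb, m⟩ hm1, by rw [bet_letter hm1]; exact zero_mem _⟩
        have hC : PP (emb ⟨yb, ya⟩) v := ih v hlen ⟨yb, ya⟩ hy1
        unfold PP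
        have key : qp (emb ⟨yb, xa⟩) u - bet u + bet (emb ⟨yb, xa⟩ * u) - bet (emb ⟨yb, xa⟩) =
            qp (emb ⟨yb, xa⟩) (emb ⟨yb, ya⟩) +
              (qp (emb ⟨yb, m⟩) v - bet v + bet (emb ⟨yb, m⟩ * v) - bet (emb ⟨yb, m⟩)) +
              bet (emb (⟨yb, m⟩ : Σ b, Fam G₁ G₂ b)) -
              (qp (emb ⟨yb, ya⟩) v - bet v + bet (emb ⟨yb, ya⟩ * v) - bet (emb ⟨yb, ya⟩)) := by
          rw [hq, hxyu, bet_letter (x := ⟨yb, xa⟩) hx, bet_letter (x := ⟨yb, ya⟩) hy1]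
          rw [huv]
          abel
        rw [key]
        exact sub_mem (add_mem (add_mem (qp_same_fac yb xa ya) hBm.1) hBm.2) hC
      · -- different factors
        have hfst : CoprodI.Word.fstIdx (nfW u) ≠ some xb := by
          rw [CoprodI.Word.fstIdx, hl]
          simp only [List.head?_cons, Option.map_some]
          intro hcon
          exact hbb (by injection hcon)
        have hcons : (nfW (emb ⟨xb, xa⟩ * u)).toList = ⟨xb, xa⟩ :: (nfW u).toList :=
          nfW_cons ⟨xb, xa⟩ hx u hfst
        have hbetx : bet (emb ⟨xb, xa⟩ * u) = bet u - qp (emb ⟨xb, xa⟩) u := by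
          have := bet_cons hcons
          rw [← self_eq_prodl u] at this
          exact this
        unfold PP
        have key : qp (emb ⟨xb, xa⟩) u - bet u + bet (emb ⟨xb, xa⟩ * u) - bet (emb ⟨xb, xa⟩) =
            0 := by
          rw [hbetx, bet_letter hx]
          abel
        rw [key]
        exact zero_mem _

lemma main_all : ∀ n : ℕ, ∀ g : Coprod G₁ G₂, (nfW g).toList.length ≤ n →
    ∀ h : Coprod G₁ G₂, PP g h := by
  intro n
  induction n with
  | zero =>
    intro g hg h
    have hg1 : g = 1 := eq_one_of_nfW_nil g (List.length_eq_zero_iff.mp (Nat.le_zero.mp hg))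
    subst hg1
    exact main_one h
  | succ n ih =>
    intro g hg h
    rcases hl : (nfW g).toList with _ | ⟨x, l⟩
    · have : g = 1 := eq_one_of_nfW_nil g hl
      subst this
      exact main_one h
    · have hx1 : x.2 ≠ 1 := (nfW g).ne_one _ (by rw [hl]; exact List.mem_cons_self)
      set v := prodl l with hv
      have hlen : (nfW v).toList.length ≤ n := by
        rw [nfW_tail hl]
        have : (nfW g).toList.length ≤ n + 1 := hg
        rw [hl] at this
        simpa using this
      have hgv : g = emb x * v := by
        conv_lhs => rw [self_eq_prodl g, hl, prodl_cons]
      have hA : PP (emb x) (v * h) := main_L2 (nfW (v * h)).toList.length (v * h) le_rfl x hx1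
      have hB : PP (emb x) v := main_L2 (nfW v).toList.length v le_rfl x hx1
      have hC : PP v h := ih v hlen h
      unfold PP at hA hB hC ⊢
      have hq : qp g h = qp (emb x) (v * h) - qp (emb x) v + qp v h := by
        have := rel (emb x) v h
        rw [← hgv] at this
        have h1 : qp g h - (qp (emb x) (v * h) - qp (emb x) v + qp v h) = 0 := by
          rw [this]
          abel
        exact sub_eq_zero.mp h1
      have key : qp g h - bet h + bet (g * h) - bet g =
          (qp (emb x) (v * h) - bet (v * h) + bet (emb x * (v * h)) - bet (emb x)) -
            (qp (emb x) v - bet v + bet (emb x * v) - bet (emb x)) +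
            (qp v h - bet h + bet (v * h) - bet v) := by
        rw [hq, hgv, mul_assoc]
        abel
      rw [key]
      exact add_mem (sub_mem hA hB) hC

lemma PP_all (g h : Coprod G₁ G₂) : PP g h :=
  main_all (nfW g).toList.length g le_rfl h

end core
section assemble

variable {G₁ : Type u} {G₂ : Type v} [Group G₁] [Group G₂]

noncomputable def betlin : ((Coprod G₁ G₂) →₀ ℤ) →ₗ[ℤ] QQ G₁ G₂ :=
  Finsupp.lift (QQ G₁ G₂) ℤ (Coprod G₁ G₂) bet

lemma betlin_single (u : Coprod G₁ G₂) (c : ℤ) :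
    betlin (Finsupp.single u c) = c • bet u := by
  simp [betlin, Finsupp.lift_apply, Finsupp.sum_single_index]

lemma all_good (z : (Coprod G₁ G₂ × Coprod G₁ G₂) →₀ ℤ) :
    mq z - betlin (barD2 (Coprod G₁ G₂) z) ∈ Fac (G₁ := G₁) (G₂ := G₂) := by
  set L : ((Coprod G₁ G₂ × Coprod G₁ G₂) →₀ ℤ) →ₗ[ℤ] QQ G₁ G₂ :=
    mq - betlin.comp (barD2 (Coprod G₁ G₂)) with hL
  have hLz : ∀ w, L w = mq w - betlin (barD2 (Coprod G₁ G₂) w) := fun w => rfl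
  rw [← hLz]
  induction z using Finsupp.induction with
  | zero => rw [map_zero]; exact zero_mem _
  | single_add p c f _ _ ih =>
    rw [map_add]
    refine add_mem ?_ ih
    obtain ⟨g, h⟩ := p
    have h1 : (Finsupp.single ((g, h) : Coprod G₁ G₂ × Coprod G₁ G₂) c) =
        c • Finsupp.single ((g, h) : Coprod G₁ G₂ × Coprod G₁ G₂) (1 : ℤ) := by
      rw [Finsupp.smul_single, smul_eq_mul, mul_one]
    rw [h1, map_smul]
    refine Submodule.smul_mem _ _ ?_
    have h2 : L (Finsupp.single ((g, h) : Coprod G₁ G₂ × Coprod G₁ G₂) 1) =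
        qp g h - bet h + bet (g * h) - bet g := by
      rw [hLz, barD2_single, map_add, map_sub, betlin_single, betlin_single, betlin_single,
        one_smul, one_smul, one_smul]
      unfold qp
      abel
    rw [h2]
    exact PP_all g h

lemma d2_d3_zero (G : Type*) [Group G] (w : (G × G × G) →₀ ℤ) :
    barD2 G (barD3 G w) = 0 := by
  induction w using Finsupp.induction with
  | zero => rw [map_zero, map_zero]
  | single_add p c f _ _ ih =>
    rw [map_add, map_add, ih, add_zero]
    obtain ⟨g, h, k⟩ := p
    have h1 : (Finsupp.single ((g, h, k) : G × G × G) c) =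
        c • Finsupp.single ((g, h, k) : G × G × G) (1 : ℤ) := by
      rw [Finsupp.smul_single, smul_eq_mul, mul_one]
    rw [h1, map_smul, map_smul]
    rw [barD3_single, map_sub, map_add, map_sub, barD2_single, barD2_single, barD2_single,
      barD2_single, mul_assoc]
    have : (Finsupp.single k 1 - Finsupp.single (h * k) 1 + Finsupp.single h 1 -
        (Finsupp.single k 1 - Finsupp.single (g * (h * k)) 1 + Finsupp.single (g * h) 1) +
        (Finsupp.single (h * k) 1 - Finsupp.single (g * (h * k)) 1 + Finsupp.single g 1) -
        (Finsupp.single h 1 - Finsupp.single (g * h) 1 + Finsupp.single g 1) :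
        G →₀ ℤ) = 0 := by abel
    rw [this, smul_zero]

lemma inl_injective : Function.Injective (Coprod.inl : G₁ →* Coprod G₁ G₂) := by
  intro a b hab
  have := congrArg (Coprod.fst : Coprod G₁ G₂ →* G₁) hab
  simpa using this

lemma inr_injective : Function.Injective (Coprod.inr : G₂ →* Coprod G₁ G₂) := by
  intro a b hab
  have := congrArg (Coprod.snd : Coprod G₁ G₂ →* G₂) hab
  simpa using this

lemma inl_ne_inr {x : G₁} {y : G₂} (hx : x ≠ 1) :
    (Coprod.inl x : Coprod G₁ G₂) ≠ Coprod.inr y := by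
  intro hcon
  have := congrArg (Coprod.fst : Coprod G₁ G₂ →* G₁) hcon
  simp at this
  exact hx this

lemma inr_ne_inl {x : G₂} {y : G₁} (hx : x ≠ 1) :
    (Coprod.inr x : Coprod G₁ G₂) ≠ Coprod.inl y := by
  intro hcon
  have := congrArg (Coprod.snd : Coprod G₁ G₂ →* G₂) hcon
  simp at this
  exact hx this

/-- Main surjectivity decomposition: every cycle is homologous to factor cycles. -/
lemma surj_decomp (z : (Coprod G₁ G₂ × Coprod G₁ G₂) →₀ ℤ)
    (hz : barD2 (Coprod G₁ G₂) z = 0) :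
    ∃ (z₁ : (G₁ × G₁) →₀ ℤ) (z₂ : (G₂ × G₂) →₀ ℤ),
      barD2 G₁ z₁ = 0 ∧ barD2 G₂ z₂ = 0 ∧
      z - (ch2 Coprod.inl z₁ + ch2 Coprod.inr z₂) ∈
        LinearMap.range (barD3 (Coprod G₁ G₂)) := by
  have hgood := all_good (G₁ := G₁) (G₂ := G₂) z
  rw [hz, map_zero, sub_zero] at hgood
  obtain ⟨y, hy_mem, hy_eq⟩ := hgood
  rw [SetLike.mem_coe, Submodule.mem_sup] at hy_mem
  obtain ⟨y₁, ⟨u₁, rfl⟩, y₂, ⟨u₂, rfl⟩, rfl⟩ := hy_mem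
  -- z - (ch2 inl u₁ + ch2 inr u₂) ∈ range d₃
  have hdiff : z - (ch2 Coprod.inl u₁ + ch2 Coprod.inr u₂) ∈
      LinearMap.range (barD3 (Coprod G₁ G₂)) := by
    have : mq (G₁ := G₁) (G₂ := G₂) (ch2 Coprod.inl u₁ + ch2 Coprod.inr u₂) = mq z := hy_eq
    rw [mq, Submodule.mkQ_apply, Submodule.mkQ_apply] at this
    exact (Submodule.Quotient.eq _).mp this.symm
  -- the image is a cycle
  have hd2y : barD2 (Coprod G₁ G₂) (ch2 Coprod.inl u₁ + ch2 Coprod.inr u₂) = 0 := by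
    obtain ⟨w, hw⟩ := hdiff
    have := congrArg (barD2 (Coprod G₁ G₂)) hw
    rw [d2_d3_zero, map_sub, hz, zero_sub] at this
    exact neg_eq_zero.mp this.symm
  set a₁ := barD2 G₁ u₁ with ha₁def
  set a₂ := barD2 G₂ u₂ with ha₂def
  have hcomm₁ : barD2 (Coprod G₁ G₂) (ch2 Coprod.inl u₁) = ch1 Coprod.inl a₁ :=
    congrArg (fun L => L u₁) (d2_comm (Coprod.inl : G₁ →* Coprod G₁ G₂))
  have hcomm₂ : barD2 (Coprod G₁ G₂) (ch2 Coprod.inr u₂) = ch1 Coprod.inr a₂ :=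
    congrArg (fun L => L u₂) (d2_comm (Coprod.inr : G₂ →* Coprod G₁ G₂))
  have hsum : ch1 (Coprod.inl : G₁ →* Coprod G₁ G₂) a₁ + ch1 Coprod.inr a₂ = 0 := by
    rw [← hcomm₁, ← hcomm₂, ← map_add, hd2y]
  -- coefficient extraction
  have hmap1 : ∀ w : G₁, (ch1 (Coprod.inl : G₁ →* Coprod G₁ G₂) a₁) (Coprod.inl w) = a₁ w :=
    fun w => Finsupp.mapDomain_apply inl_injective _ _
  have hmap2 : ∀ w : G₂, (ch1 (Coprod.inr : G₂ →* Coprod G₁ G₂) a₂) (Coprod.inr w) = a₂ w :=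
    fun w => Finsupp.mapDomain_apply inr_injective _ _
  have ha₁ : ∀ w : G₁, w ≠ 1 → a₁ w = 0 := by
    intro w hw
    have h0 := congrArg (fun v => v (Coprod.inl w : Coprod G₁ G₂)) hsum
    simp only [Finsupp.coe_add, Pi.add_apply, Finsupp.coe_zero, Pi.zero_apply] at h0
    have h2 : (ch1 (Coprod.inr : G₂ →* Coprod G₁ G₂) a₂) (Coprod.inl w) = 0 := by
      apply Finsupp.mapDomain_notin_range
      rintro ⟨y, hy⟩
      exact inl_ne_inr hw hy.symm
    rw [hmap1 w, h2, add_zero] at h0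
    exact h0
  have ha₂ : ∀ w : G₂, w ≠ 1 → a₂ w = 0 := by
    intro w hw
    have h0 := congrArg (fun v => v (Coprod.inr w : Coprod G₁ G₂)) hsum
    simp only [Finsupp.coe_add, Pi.add_apply, Finsupp.coe_zero, Pi.zero_apply] at h0
    have h2 : (ch1 (Coprod.inl : G₁ →* Coprod G₁ G₂) a₁) (Coprod.inr w) = 0 := by
      apply Finsupp.mapDomain_notin_range
      rintro ⟨y, hy⟩
      exact inr_ne_inl hw hy.symm
    rw [hmap2 w, h2, zero_add] at h0
    exact h0
  have h11 : a₁ 1 + a₂ 1 = 0 := by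
    have h0 := congrArg (fun v => v (1 : Coprod G₁ G₂)) hsum
    simp only [Finsupp.coe_add, Pi.add_apply, Finsupp.coe_zero, Pi.zero_apply] at h0
    have e1 : (1 : Coprod G₁ G₂) = Coprod.inl 1 := (map_one _).symm
    have e2 : (1 : Coprod G₁ G₂) = Coprod.inr 1 := (map_one _).symm
    have k1 : (ch1 (Coprod.inl : G₁ →* Coprod G₁ G₂) a₁) (1 : Coprod G₁ G₂) = a₁ 1 := by
      rw [e1]; exact hmap1 1
    have k2 : (ch1 (Coprod.inr : G₂ →* Coprod G₁ G₂) a₂) (1 : Coprod G₁ G₂) = a₂ 1 := by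
      rw [e2]; exact hmap2 1
    rw [k1, k2] at h0
    exact h0
  have ha₁' : a₁ = Finsupp.single 1 (a₁ 1) := by
    ext w
    by_cases hw : w = 1
    · subst hw; rw [Finsupp.single_eq_same]
    · rw [ha₁ w hw, Finsupp.single_eq_of_ne' (Ne.symm hw)]
  have ha₂' : a₂ = Finsupp.single 1 (-(a₁ 1)) := by
    ext w
    by_cases hw : w = 1
    · subst hw
      rw [Finsupp.single_eq_same]
      omega
    · rw [ha₂ w hw, Finsupp.single_eq_of_ne' (Ne.symm hw)]
  set c := a₁ 1 with hc
  refine ⟨u₁ - Finsupp.single (1, 1) c, u₂ + Finsupp.single (1, 1) c, ?_, ?_, ?_⟩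
  · rw [map_sub, ← ha₁def]
    have hs : barD2 G₁ (Finsupp.single ((1 : G₁), (1 : G₁)) c) = Finsupp.single 1 c := by
      have h1 : (Finsupp.single ((1 : G₁), (1 : G₁)) c) =
          c • Finsupp.single ((1 : G₁), (1 : G₁)) (1 : ℤ) := by
        rw [Finsupp.smul_single, smul_eq_mul, mul_one]
      rw [h1, map_smul, barD2_single, mul_one]
      have : (Finsupp.single (1 : G₁) 1 - Finsupp.single (1 : G₁) 1 +
          Finsupp.single (1 : G₁) 1 : G₁ →₀ ℤ) = Finsupp.single 1 1 := by abel
      rw [this, Finsupp.smul_single, smul_eq_mul, mul_one]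
    rw [hs, ha₁']
    exact sub_self _
  · rw [map_add, ← ha₂def]
    have hs : barD2 G₂ (Finsupp.single ((1 : G₂), (1 : G₂)) c) = Finsupp.single 1 c := by
      have h1 : (Finsupp.single ((1 : G₂), (1 : G₂)) c) =
          c • Finsupp.single ((1 : G₂), (1 : G₂)) (1 : ℤ) := by
        rw [Finsupp.smul_single, smul_eq_mul, mul_one]
      rw [h1, map_smul, barD2_single, mul_one]
      have : (Finsupp.single (1 : G₂) 1 - Finsupp.single (1 : G₂) 1 +
          Finsupp.single (1 : G₂) 1 : G₂ →₀ ℤ) = Finsupp.single 1 1 := by abel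
      rw [this, Finsupp.smul_single, smul_eq_mul, mul_one]
    rw [hs, ha₂']
    ext w
    simp
  · have e₁ : ch2 (Coprod.inl : G₁ →* Coprod G₁ G₂) (Finsupp.single (1, 1) c) =
        Finsupp.single (1, 1) c := by
      rw [ch2_single, map_one]
    have e₂ : ch2 (Coprod.inr : G₂ →* Coprod G₁ G₂) (Finsupp.single (1, 1) c) =
        Finsupp.single (1, 1) c := by
      rw [ch2_single, map_one]
    rw [map_sub, map_add, e₁, e₂]
    have : z - (ch2 Coprod.inl u₁ - Finsupp.single (1, 1) c +
        (ch2 Coprod.inr u₂ + Finsupp.single (1, 1) c)) =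
        z - (ch2 Coprod.inl u₁ + ch2 Coprod.inr u₂) := by abel
    rw [this]
    exact hdiff

end assemble


/-- For any two groups `G₁` and `G₂`, the second integral homology of their
free product (coproduct of groups) splits: `H₂(G₁ ∗ G₂; ℤ) ≅ H₂(G₁; ℤ) × H₂(G₂; ℤ)`. -/
theorem h2Z_coprod (G₁ G₂ : Type*) [Group G₁] [Group G₂] :
    Nonempty (H2Z (Monoid.Coprod G₁ G₂) ≃+ H2Z G₁ × H2Z G₂) := by
  set φ : H2Z G₁ × H2Z G₂ →+ H2Z (Coprod G₁ G₂) :=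
    ((H2Zmap (Coprod.inl : G₁ →* Coprod G₁ G₂)).toAddMonoidHom.comp
      (AddMonoidHom.fst (H2Z G₁) (H2Z G₂))) +
    ((H2Zmap (Coprod.inr : G₂ →* Coprod G₁ G₂)).toAddMonoidHom.comp
      (AddMonoidHom.snd (H2Z G₁) (H2Z G₂))) with hφ
  have hφ_apply : ∀ x y, φ (x, y) = H2Zmap Coprod.inl x + H2Zmap Coprod.inr y := by
    intro x y
    rfl
  have hinj : Function.Injective φ := by
    intro a b hab
    have key : ∀ p : H2Z G₁ × H2Z G₂,
        H2Zmap (Coprod.fst : Coprod G₁ G₂ →* G₁) (φ p) = p.1 ∧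
        H2Zmap (Coprod.snd : Coprod G₁ G₂ →* G₂) (φ p) = p.2 := by
      rintro ⟨x, y⟩
      rw [hφ_apply]
      constructor
      · rw [map_add, H2Zmap_comp, H2Zmap_comp]
        rw [show (Coprod.fst : Coprod G₁ G₂ →* G₁).comp Coprod.inl = MonoidHom.id G₁ from rfl]
        rw [H2Zmap_one ((Coprod.fst : Coprod G₁ G₂ →* G₁).comp Coprod.inr) rfl]
        rw [H2Zmap_id, add_zero]
      · rw [map_add, H2Zmap_comp, H2Zmap_comp]
        rw [show (Coprod.snd : Coprod G₁ G₂ →* G₂).comp Coprod.inr = MonoidHom.id G₂ from rfl]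
        rw [H2Zmap_one ((Coprod.snd : Coprod G₁ G₂ →* G₂).comp Coprod.inl) rfl]
        rw [H2Zmap_id, zero_add]
    have h1 := key a
    have h2 := key b
    ext
    · rw [← h1.1, ← h2.1, hab]
    · rw [← h1.2, ← h2.2, hab]
  have hsurj : Function.Surjective φ := by
    intro czz
    obtain ⟨⟨z, hz⟩, rfl⟩ := Submodule.Quotient.mk_surjective _ czz
    have hz' : barD2 (Coprod G₁ G₂) z = 0 := hz
    obtain ⟨z₁, z₂, hz₁, hz₂, hdiff⟩ := surj_decomp z hz'
    refine ⟨(Submodule.Quotient.mk ⟨z₁, LinearMap.mem_ker.mpr hz₁⟩, Submodule.Quotient.mk ⟨z₂, LinearMap.mem_ker.mpr hz₂⟩), ?_⟩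
    erw [hφ_apply]
    rw [H2Zmap_mk, H2Zmap_mk]
    erw [← Submodule.Quotient.mk_add, Submodule.Quotient.eq]
    refine (Submodule.mem_comap).mpr ?_
    have hcoord : ((kmap (Coprod.inl : G₁ →* Coprod G₁ G₂) ⟨z₁, LinearMap.mem_ker.mpr hz₁⟩ +
        kmap (Coprod.inr : G₂ →* Coprod G₁ G₂) ⟨z₂, LinearMap.mem_ker.mpr hz₂⟩) - ⟨z, hz⟩ :
        LinearMap.ker (barD2 (Coprod G₁ G₂))).1 =
        (ch2 Coprod.inl z₁ + ch2 Coprod.inr z₂) - z := rfl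
    rw [Submodule.coe_subtype, hcoord]
    have : (ch2 Coprod.inl z₁ + ch2 Coprod.inr z₂) - z =
        -(z - (ch2 Coprod.inl z₁ + ch2 Coprod.inr z₂)) := by abel
    rw [this]
    exact neg_mem hdiff
  exact ⟨(AddEquiv.ofBijective φ ⟨hinj, hsurj⟩).symm⟩
end

section
/- Let X₁ and X₂ be types, let φᵢ : F(Xᵢ) → Gᵢ (i = 1,2) be surjective homomorphisms from the free groups F(Xᵢ) onto groups Gᵢ, with kernels Rᵢ = ker φᵢ, and let φ : F(X₁ ⊕ X₂) → G₁ ∗ G₂ be the induced surjection from the free group on the disjoint union of X₁ and X₂ onto the free product, with kernel R = ker φ. Then there is a group isomorphism (R ∩ [F,F])/[R,F] ≅ (R₁ ∩ [F₁,F₁])/[R₁,F₁] × (R₂ ∩ [F₂,F₂])/[R₂,F₂], where F = F(X₁ ⊕ X₂) and Fᵢ = F(Xᵢ). -/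
open Monoid

/-- The Schur multiplier of `G` computed via Hopf's formula from a free presentation
`1 → R → F → G → 1`:  `M(G) = (R ∩ [F,F]) / [R,F]`. -/
def hopfMultiplier {F : Type*} [Group F] (R : Subgroup F) [R.Normal] :=
  (R ⊓ commutator F : Subgroup F) ⧸
    ((⁅R, (⊤ : Subgroup F)⁆).subgroupOf (R ⊓ commutator F))

noncomputable instance {F : Type*} [Group F] (R : Subgroup F) [R.Normal] :
    Group (hopfMultiplier R) :=
  inferInstanceAs <| Group <|
    (R ⊓ commutator F : Subgroup F) ⧸
      ((⁅R, (⊤ : Subgroup F)⁆).subgroupOf (R ⊓ commutator F))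

/-- The surjection `F(X₁ ⊕ X₂) → G₁ ∗ G₂` induced by surjections `φᵢ : F(Xᵢ) → Gᵢ`:
a generator from `X₁` is sent to the image in `G₁ ∗ G₂` of its `φ₁`-image, and similarly
for `X₂`. -/
def inducedPresentation {X₁ X₂ G₁ G₂ : Type*} [Group G₁] [Group G₂]
    (φ₁ : FreeGroup X₁ →* G₁) (φ₂ : FreeGroup X₂ →* G₂) :
    FreeGroup (X₁ ⊕ X₂) →* Coprod G₁ G₂ :=
  FreeGroup.lift <| Sum.elim
    (fun x => Coprod.inl (φ₁ (FreeGroup.of x)))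
    (fun x => Coprod.inr (φ₂ (FreeGroup.of x)))

/-! ### Auxiliary machinery -/

open scoped commutatorElement

section HopfHom

variable {F F' : Type*} [Group F] [Group F']

theorem hopf_map_mem_commutator (f : F →* F') {x : F} (hx : x ∈ commutator F) :
    f x ∈ commutator F' := by
  have h : Subgroup.map f (commutator F) ≤ commutator F' := by
    rw [commutator_def, Subgroup.map_commutator]
    exact Subgroup.commutator_mono le_top le_top
  exact h (Subgroup.mem_map_of_mem f hx)

theorem hopf_map_mem_commSub (f : F →* F') {R : Subgroup F} {R' : Subgroup F'}
    (h : ∀ x ∈ R, f x ∈ R') {x : F} (hx : x ∈ ⁅R, (⊤ : Subgroup F)⁆) :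
    f x ∈ ⁅R', (⊤ : Subgroup F')⁆ := by
  have hle : Subgroup.map f ⁅R, (⊤ : Subgroup F)⁆ ≤ ⁅R', (⊤ : Subgroup F')⁆ := by
    rw [Subgroup.map_commutator]
    exact Subgroup.commutator_mono (Subgroup.map_le_iff_le_comap.mpr h) le_top
  exact hle (Subgroup.mem_map_of_mem f hx)

/-- Functoriality of the Hopf quotient along a hom mapping `R` into `R'`. -/
def hopfHom (R : Subgroup F) (R' : Subgroup F') [R.Normal] [R'.Normal]
    (f : F →* F') (h : ∀ x ∈ R, f x ∈ R') :
    hopfMultiplier R →* hopfMultiplier R' :=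
  QuotientGroup.map _ _
    (MonoidHom.codRestrict (f.comp (R ⊓ commutator F).subtype) (R' ⊓ commutator F')
      fun x => ⟨h _ x.2.1, hopf_map_mem_commutator f x.2.2⟩)
    (fun x hx => by
      rw [Subgroup.mem_comap, Subgroup.mem_subgroupOf]
      rw [Subgroup.mem_subgroupOf] at hx
      exact hopf_map_mem_commSub f h hx)

theorem hopfHom_mk (R : Subgroup F) (R' : Subgroup F') [R.Normal] [R'.Normal]
    (f : F →* F') (h : ∀ x ∈ R, f x ∈ R') (a : (R ⊓ commutator F : Subgroup F)) :
    hopfHom R R' f h (QuotientGroup.mk a) =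
      QuotientGroup.mk ⟨f a, h _ a.2.1, hopf_map_mem_commutator f a.2.2⟩ := rfl

theorem hopf_comm (R : Subgroup F) [R.Normal] (x y : hopfMultiplier R) :
    x * y = y * x := by
  induction x using QuotientGroup.induction_on with | H a =>
  induction y using QuotientGroup.induction_on with | H b =>
  show QuotientGroup.mk (a * b) = QuotientGroup.mk (b * a)
  rw [QuotientGroup.eq, Subgroup.mem_subgroupOf]
  have hc : ⁅((b : F))⁻¹, ((a : F))⁻¹⁆ ∈ ⁅R, (⊤ : Subgroup F)⁆ :=
    Subgroup.commutator_mem_commutator (inv_mem b.2.1) (Subgroup.mem_top _)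
  have he : ((((a * b)⁻¹ * (b * a) : (R ⊓ commutator F : Subgroup F))) : F)
      = ⁅((b : F))⁻¹, ((a : F))⁻¹⁆ := by
    rw [commutatorElement_def]
    push_cast
    group
  rw [he]
  exact hc


theorem conj_mk_eq {F : Type*} [Group F] (R : Subgroup F) [R.Normal] (g : F) {r : F}
    (hr : r ∈ R) :
    (QuotientGroup.mk (g * r * g⁻¹) : F ⧸ ⁅R, (⊤ : Subgroup F)⁆) = QuotientGroup.mk r := by
  rw [QuotientGroup.eq]
  have hc : ⁅g, r⁻¹⁆ ∈ ⁅(⊤ : Subgroup F), R⁆ :=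
    Subgroup.commutator_mem_commutator (Subgroup.mem_top _) (inv_mem hr)
  rw [Subgroup.commutator_comm] at hc
  have he : (g * r * g⁻¹)⁻¹ * r = ⁅g, r⁻¹⁆ := by
    rw [commutatorElement_def]; group
  rw [he]; exact hc

theorem comm_mk_of_mem {F : Type*} [Group F] (R : Subgroup F) [R.Normal] {r : F} (y : F)
    (hr : r ∈ R) :
    (QuotientGroup.mk r : F ⧸ ⁅R, (⊤ : Subgroup F)⁆) * QuotientGroup.mk y =
      QuotientGroup.mk y * QuotientGroup.mk r := by
  rw [← QuotientGroup.mk_mul, ← QuotientGroup.mk_mul, QuotientGroup.eq]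
  have hc : ⁅y⁻¹, r⁻¹⁆ ∈ ⁅(⊤ : Subgroup F), R⁆ :=
    Subgroup.commutator_mem_commutator (Subgroup.mem_top _) (inv_mem hr)
  rw [Subgroup.commutator_comm] at hc
  have he : (r * y)⁻¹ * (y * r) = ⁅y⁻¹, r⁻¹⁆ := by
    rw [commutatorElement_def]; group
  rw [he]; exact hc

/-- Abstract form of the key lemma, proved by induction over the normal closure. -/
theorem key_abstract {G Q : Type*} [Group G] [Group Q] (U : Set G) (a b c : G →* Q)
    (hbase : ∀ u ∈ U, c u = a u * b u)
    (hconj_c : ∀ g x : G, x ∈ Subgroup.normalClosure U → c (g * x * g⁻¹) = c x)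
    (hconj_a : ∀ g x : G, x ∈ Subgroup.normalClosure U → a (g * x * g⁻¹) = a x)
    (hconj_b : ∀ g x : G, x ∈ Subgroup.normalClosure U → b (g * x * g⁻¹) = b x)
    (hcomm : ∀ x y : G, x ∈ Subgroup.normalClosure U → b x * a y = a y * b x) :
    ∀ x ∈ Subgroup.normalClosure U, c x = a x * b x := by
  intro x hx
  have hx' : x ∈ Subgroup.closure (Group.conjugatesOfSet U) := hx
  induction hx' using Subgroup.closure_induction with
  | mem z hz =>
    obtain ⟨u, hu, hconj⟩ := Group.mem_conjugatesOfSet_iff.mp hz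
    obtain ⟨g, rfl⟩ := isConj_iff.mp hconj
    have huN : u ∈ Subgroup.normalClosure U := Subgroup.subset_normalClosure hu
    rw [hconj_c g u huN, hconj_a g u huN, hconj_b g u huN]
    exact hbase u hu
  | one => simp
  | mul z w hz hw pz pw =>
    have hzN : z ∈ Subgroup.normalClosure U := hz
    rw [map_mul, map_mul, map_mul, pz hz, pw hw]
    have hc : b z * a w = a w * b z := hcomm z w hzN
    rw [mul_assoc, ← mul_assoc (b z), hc, mul_assoc, ← mul_assoc]
  | inv z hz pz =>
    have hzN : z⁻¹ ∈ Subgroup.normalClosure U := inv_mem hz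
    rw [map_inv, map_inv, map_inv, pz hz, mul_inv_rev]
    have h := hcomm z⁻¹ z⁻¹ hzN
    rw [map_inv, map_inv] at h
    exact h

end HopfHom

section Main

variable {X₁ X₂ G₁ G₂ : Type*} [Group G₁] [Group G₂]

/-- Inclusion of the first free factor. -/
def fpInl : FreeGroup X₁ →* FreeGroup (X₁ ⊕ X₂) := FreeGroup.map Sum.inl

/-- Inclusion of the second free factor. -/
def fpInr : FreeGroup X₂ →* FreeGroup (X₁ ⊕ X₂) := FreeGroup.map Sum.inr

/-- Retraction onto the first free factor. -/
def fpFst : FreeGroup (X₁ ⊕ X₂) →* FreeGroup X₁ :=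
  FreeGroup.lift (Sum.elim FreeGroup.of fun _ => 1)

/-- Retraction onto the second free factor. -/
def fpSnd : FreeGroup (X₁ ⊕ X₂) →* FreeGroup X₂ :=
  FreeGroup.lift (Sum.elim (fun _ => 1) FreeGroup.of)

@[simp] theorem fpFst_inl (w : FreeGroup X₁) :
    fpFst (fpInl (X₂ := X₂) w) = w := by
  have : (fpFst).comp (fpInl (X₂ := X₂)) = MonoidHom.id (FreeGroup X₁) :=
    FreeGroup.ext_hom _ _ fun a => by
      simp [fpFst, fpInl, FreeGroup.map.of, FreeGroup.lift_apply_of]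
  exact DFunLike.congr_fun this w

@[simp] theorem fpFst_inr (w : FreeGroup X₂) :
    fpFst (fpInr (X₁ := X₁) w) = 1 := by
  have : (fpFst (X₁ := X₁) (X₂ := X₂)).comp fpInr = 1 :=
    FreeGroup.ext_hom _ _ fun a => by
      simp [fpFst, fpInr, FreeGroup.map.of, FreeGroup.lift_apply_of]
  exact DFunLike.congr_fun this w

@[simp] theorem fpSnd_inr (w : FreeGroup X₂) :
    fpSnd (fpInr (X₁ := X₁) w) = w := by
  have : (fpSnd).comp (fpInr (X₁ := X₁)) = MonoidHom.id (FreeGroup X₂) :=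
    FreeGroup.ext_hom _ _ fun a => by
      simp [fpSnd, fpInr, FreeGroup.map.of, FreeGroup.lift_apply_of]
  exact DFunLike.congr_fun this w

@[simp] theorem fpSnd_inl (w : FreeGroup X₁) :
    fpSnd (fpInl (X₂ := X₂) w) = 1 := by
  have : (fpSnd (X₁ := X₁) (X₂ := X₂)).comp fpInl = 1 :=
    FreeGroup.ext_hom _ _ fun a => by
      simp [fpSnd, fpInl, FreeGroup.map.of, FreeGroup.lift_apply_of]
  exact DFunLike.congr_fun this w

variable (φ₁ : FreeGroup X₁ →* G₁) (φ₂ : FreeGroup X₂ →* G₂)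

theorem ip_comp_inl :
    (inducedPresentation φ₁ φ₂).comp fpInl = (Coprod.inl).comp φ₁ :=
  FreeGroup.ext_hom _ _ fun a => by
    simp [inducedPresentation, fpInl, FreeGroup.map.of, FreeGroup.lift_apply_of]

theorem ip_comp_inr :
    (inducedPresentation φ₁ φ₂).comp fpInr = (Coprod.inr).comp φ₂ :=
  FreeGroup.ext_hom _ _ fun a => by
    simp [inducedPresentation, fpInr, FreeGroup.map.of, FreeGroup.lift_apply_of]

theorem fst_comp_ip :
    φ₁.comp fpFst = (Coprod.lift (MonoidHom.id G₁) 1).comp (inducedPresentation φ₁ φ₂) :=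
  FreeGroup.ext_hom _ _ fun a => by
    rcases a with x | x <;>
      simp [inducedPresentation, fpFst, FreeGroup.lift_apply_of, Coprod.lift_apply_inl,
        Coprod.lift_apply_inr]

theorem snd_comp_ip :
    φ₂.comp fpSnd = (Coprod.lift 1 (MonoidHom.id G₂)).comp (inducedPresentation φ₁ φ₂) :=
  FreeGroup.ext_hom _ _ fun a => by
    rcases a with x | x <;>
      simp [inducedPresentation, fpSnd, FreeGroup.lift_apply_of, Coprod.lift_apply_inl,
        Coprod.lift_apply_inr]

theorem mem_ker_inl {x : FreeGroup X₁} (hx : x ∈ φ₁.ker) :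
    fpInl x ∈ (inducedPresentation φ₁ φ₂).ker := by
  have := DFunLike.congr_fun (ip_comp_inl φ₁ φ₂) x
  simp only [MonoidHom.comp_apply] at this
  simp [MonoidHom.mem_ker, this, MonoidHom.mem_ker.mp hx]

theorem mem_ker_inr {x : FreeGroup X₂} (hx : x ∈ φ₂.ker) :
    fpInr x ∈ (inducedPresentation φ₁ φ₂).ker := by
  have := DFunLike.congr_fun (ip_comp_inr φ₁ φ₂) x
  simp only [MonoidHom.comp_apply] at this
  simp [MonoidHom.mem_ker, this, MonoidHom.mem_ker.mp hx]

theorem mem_ker_fst {x : FreeGroup (X₁ ⊕ X₂)} (hx : x ∈ (inducedPresentation φ₁ φ₂).ker) :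
    fpFst x ∈ φ₁.ker := by
  have := DFunLike.congr_fun (fst_comp_ip φ₁ φ₂) x
  simp only [MonoidHom.comp_apply] at this
  simp [MonoidHom.mem_ker, this, MonoidHom.mem_ker.mp hx]

theorem mem_ker_snd {x : FreeGroup (X₁ ⊕ X₂)} (hx : x ∈ (inducedPresentation φ₁ φ₂).ker) :
    fpSnd x ∈ φ₂.ker := by
  have := DFunLike.congr_fun (snd_comp_ip φ₁ φ₂) x
  simp only [MonoidHom.comp_apply] at this
  simp [MonoidHom.mem_ker, this, MonoidHom.mem_ker.mp hx]

/-- The kernel of the induced presentation is the normal closure of the images of the kernels. -/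
theorem ker_eq_normalClosure (h₁ : Function.Surjective φ₁) (h₂ : Function.Surjective φ₂) :
    (inducedPresentation φ₁ φ₂).ker =
      Subgroup.normalClosure ((fpInl '' (φ₁.ker : Set (FreeGroup X₁))) ∪
        (fpInr '' (φ₂.ker : Set (FreeGroup X₂)))) := by
  set U : Set (FreeGroup (X₁ ⊕ X₂)) :=
    (fpInl '' (φ₁.ker : Set (FreeGroup X₁))) ∪ (fpInr '' (φ₂.ker : Set (FreeGroup X₂))) with hU
  apply le_antisymm
  · set N := Subgroup.normalClosure U with hN
    have hmemU₁ : ∀ x ∈ φ₁.ker, fpInl x ∈ N := fun x hx =>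
      Subgroup.subset_normalClosure (Or.inl ⟨x, hx, rfl⟩)
    have hmemU₂ : ∀ x ∈ φ₂.ker, fpInr x ∈ N := fun x hx =>
      Subgroup.subset_normalClosure (Or.inr ⟨x, hx, rfl⟩)
    set lam₁ : FreeGroup X₁ →* FreeGroup (X₁ ⊕ X₂) ⧸ N := (QuotientGroup.mk' N).comp fpInl
      with hlam₁def
    set lam₂ : FreeGroup X₂ →* FreeGroup (X₁ ⊕ X₂) ⧸ N := (QuotientGroup.mk' N).comp fpInr
      with hlam₂def
    have hlam₁ : φ₁.ker ≤ lam₁.ker := fun x hx => by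
      have h := hmemU₁ x hx
      simpa [hlam₁def, MonoidHom.mem_ker, QuotientGroup.eq_one_iff] using h
    have hlam₂ : φ₂.ker ≤ lam₂.ker := fun x hx => by
      have h := hmemU₂ x hx
      simpa [hlam₂def, MonoidHom.mem_ker, QuotientGroup.eq_one_iff] using h
    set e₁ := QuotientGroup.quotientKerEquivOfSurjective φ₁ h₁ with he₁
    set e₂ := QuotientGroup.quotientKerEquivOfSurjective φ₂ h₂ with he₂
    set ψ₁ : G₁ →* FreeGroup (X₁ ⊕ X₂) ⧸ N :=
      (QuotientGroup.lift φ₁.ker lam₁ hlam₁).comp e₁.symm.toMonoidHom with hψ₁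
    set ψ₂ : G₂ →* FreeGroup (X₁ ⊕ X₂) ⧸ N :=
      (QuotientGroup.lift φ₂.ker lam₂ hlam₂).comp e₂.symm.toMonoidHom with hψ₂
    set ψ := Coprod.lift ψ₁ ψ₂ with hψdef
    have hψ : ψ.comp (inducedPresentation φ₁ φ₂) = QuotientGroup.mk' N := by
      refine FreeGroup.ext_hom _ _ fun a => ?_
      rcases a with x | x
      · have hh1 : (inducedPresentation φ₁ φ₂) (FreeGroup.of (Sum.inl x)) =
            Coprod.inl (φ₁ (FreeGroup.of x)) := by
          simp [inducedPresentation, FreeGroup.lift_apply_of]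
        have hh2 : e₁.symm (φ₁ (FreeGroup.of x)) =
            (QuotientGroup.mk (FreeGroup.of x) : FreeGroup X₁ ⧸ φ₁.ker) := by
          rw [MulEquiv.symm_apply_eq, he₁]
          simp [QuotientGroup.quotientKerEquivOfSurjective]
        simp only [MonoidHom.comp_apply, hh1, hψdef, Coprod.lift_apply_inl, hψ₁,
          MulEquiv.coe_toMonoidHom, hh2]
        rw [QuotientGroup.lift_mk']
        simp [hlam₁def, fpInl, FreeGroup.map.of]
      · have hh1 : (inducedPresentation φ₁ φ₂) (FreeGroup.of (Sum.inr x)) =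
            Coprod.inr (φ₂ (FreeGroup.of x)) := by
          simp [inducedPresentation, FreeGroup.lift_apply_of]
        have hh2 : e₂.symm (φ₂ (FreeGroup.of x)) =
            (QuotientGroup.mk (FreeGroup.of x) : FreeGroup X₂ ⧸ φ₂.ker) := by
          rw [MulEquiv.symm_apply_eq, he₂]
          simp [QuotientGroup.quotientKerEquivOfSurjective]
        simp only [MonoidHom.comp_apply, hh1, hψdef, Coprod.lift_apply_inr, hψ₂,
          MulEquiv.coe_toMonoidHom, hh2]
        rw [QuotientGroup.lift_mk']
        simp [hlam₂def, fpInr, FreeGroup.map.of]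
    intro w hw
    have hone : QuotientGroup.mk' N w = 1 := by
      have h := DFunLike.congr_fun hψ w
      simp only [MonoidHom.comp_apply] at h
      rw [← h, MonoidHom.mem_ker.mp hw, map_one]
    exact (QuotientGroup.eq_one_iff w).mp hone
  · refine Subgroup.normalClosure_le_normal ?_
    rintro x (⟨r, hr, rfl⟩ | ⟨r, hr, rfl⟩)
    · exact mem_ker_inl φ₁ φ₂ hr
    · exact mem_ker_inr φ₁ φ₂ hr

/-- Key lemma: modulo `[R,F]`, every element of `R` is the product of the images of
its projections. -/
theorem key_lemma (h₁ : Function.Surjective φ₁) (h₂ : Function.Surjective φ₂)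
    {w : FreeGroup (X₁ ⊕ X₂)} (hw : w ∈ (inducedPresentation φ₁ φ₂).ker) :
    w⁻¹ * (fpInl (fpFst w) * fpInr (fpSnd w)) ∈
      ⁅(inducedPresentation φ₁ φ₂).ker, (⊤ : Subgroup (FreeGroup (X₁ ⊕ X₂)))⁆ := by
  set U : Set (FreeGroup (X₁ ⊕ X₂)) :=
    (fpInl '' (φ₁.ker : Set (FreeGroup X₁))) ∪ (fpInr '' (φ₂.ker : Set (FreeGroup X₂))) with hU
  have hRU : (inducedPresentation φ₁ φ₂).ker = Subgroup.normalClosure U :=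
    ker_eq_normalClosure φ₁ φ₂ h₁ h₂
  -- membership helpers
  have hNR : Subgroup.normalClosure U ≤ (inducedPresentation φ₁ φ₂).ker := hRU.ge
  have hmemA : ∀ x : FreeGroup (X₁ ⊕ X₂), x ∈ Subgroup.normalClosure U →
      fpInl (fpFst x) ∈ (inducedPresentation φ₁ φ₂).ker := fun x hx =>
    mem_ker_inl φ₁ φ₂ (mem_ker_fst φ₁ φ₂ (hNR hx))
  have hmemB : ∀ x : FreeGroup (X₁ ⊕ X₂), x ∈ Subgroup.normalClosure U →
      fpInr (fpSnd x) ∈ (inducedPresentation φ₁ φ₂).ker := fun x hx =>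
    mem_ker_inr φ₁ φ₂ (mem_ker_snd φ₁ φ₂ (hNR hx))
  set c : FreeGroup (X₁ ⊕ X₂) →*
      FreeGroup (X₁ ⊕ X₂) ⧸ ⁅(inducedPresentation φ₁ φ₂).ker, (⊤ : Subgroup _)⁆ :=
    QuotientGroup.mk' _ with hc
  have hmain := key_abstract U (c.comp (fpInl.comp fpFst)) (c.comp (fpInr.comp fpSnd)) c
    ?_ ?_ ?_ ?_ ?_ w (hRU ▸ hw)
  · simp only [MonoidHom.comp_apply, hc, QuotientGroup.mk'_apply] at hmain
    rw [← QuotientGroup.mk_mul, QuotientGroup.eq] at hmain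
    exact hmain
  · -- base case
    rintro u (⟨r, hr, rfl⟩ | ⟨r, hr, rfl⟩)
    · simp only [MonoidHom.comp_apply, fpFst_inl, fpSnd_inl, map_one, mul_one]
    · simp only [MonoidHom.comp_apply, fpFst_inr, fpSnd_inr, map_one, one_mul]
  · -- conj invariance of c
    intro g x hx
    simp only [hc, QuotientGroup.mk'_apply]
    exact conj_mk_eq _ g (hNR hx)
  · -- conj invariance of a
    intro g x hx
    simp only [MonoidHom.comp_apply, map_mul, map_inv, hc, QuotientGroup.mk'_apply]
    exact conj_mk_eq _ _ (hmemA x hx)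
  · -- conj invariance of b
    intro g x hx
    simp only [MonoidHom.comp_apply, map_mul, map_inv, hc, QuotientGroup.mk'_apply]
    exact conj_mk_eq _ _ (hmemB x hx)
  · -- commuting
    intro x y hx
    simp only [MonoidHom.comp_apply, hc, QuotientGroup.mk'_apply]
    exact comm_mk_of_mem _ _ (hmemB x hx)

end Main

/-- Let `φᵢ : F(Xᵢ) → Gᵢ` be surjective homomorphisms from free groups with
kernels `Rᵢ`, and let `φ : F(X₁ ⊕ X₂) → G₁ ∗ G₂` be the induced surjection onto the free
product, with kernel `R`.  Then
`(R ∩ [F,F])/[R,F] ≅ (R₁ ∩ [F₁,F₁])/[R₁,F₁] × (R₂ ∩ [F₂,F₂])/[R₂,F₂]`,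
i.e. `M(G₁ ∗ G₂) ≅ M(G₁) ⊕ M(G₂)` in terms of Hopf's formula. -/
theorem hopfMultiplier_coprod
    {X₁ X₂ G₁ G₂ : Type*} [Group G₁] [Group G₂]
    (φ₁ : FreeGroup X₁ →* G₁) (φ₂ : FreeGroup X₂ →* G₂)
    (h₁ : Function.Surjective φ₁) (h₂ : Function.Surjective φ₂) :
    Nonempty (hopfMultiplier (inducedPresentation φ₁ φ₂).ker ≃*
      hopfMultiplier φ₁.ker × hopfMultiplier φ₂.ker) := by
  let Φ : hopfMultiplier (inducedPresentation φ₁ φ₂).ker →*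
      hopfMultiplier φ₁.ker × hopfMultiplier φ₂.ker :=
    (hopfHom _ φ₁.ker fpFst fun _ hx => mem_ker_fst φ₁ φ₂ hx).prod
      (hopfHom _ φ₂.ker fpSnd fun _ hx => mem_ker_snd φ₁ φ₂ hx)
  let Ψ : hopfMultiplier φ₁.ker × hopfMultiplier φ₂.ker →*
      hopfMultiplier (inducedPresentation φ₁ φ₂).ker :=
    MonoidHom.noncommCoprod
      (hopfHom φ₁.ker _ fpInl fun _ hx => mem_ker_inl φ₁ φ₂ hx)
      (hopfHom φ₂.ker _ fpInr fun _ hx => mem_ker_inr φ₁ φ₂ hx)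
      (fun _ _ => hopf_comm _ _ _)
  refine ⟨MonoidHom.toMulEquiv Φ Ψ ?_ ?_⟩
  · -- Ψ ∘ Φ = id
    refine MonoidHom.ext fun x => ?_
    induction x using QuotientGroup.induction_on with | H a =>
    show Ψ (Φ (QuotientGroup.mk a)) = QuotientGroup.mk a
    have hΦ : Φ (QuotientGroup.mk a) =
        (hopfHom _ φ₁.ker fpFst (fun _ hx => mem_ker_fst φ₁ φ₂ hx) (QuotientGroup.mk a),
         hopfHom _ φ₂.ker fpSnd (fun _ hx => mem_ker_snd φ₁ φ₂ hx) (QuotientGroup.mk a)) := rfl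
    rw [hΦ, hopfHom_mk, hopfHom_mk]
    show hopfHom φ₁.ker _ fpInl (fun _ hx => mem_ker_inl φ₁ φ₂ hx) (QuotientGroup.mk _) *
        hopfHom φ₂.ker _ fpInr (fun _ hx => mem_ker_inr φ₁ φ₂ hx) (QuotientGroup.mk _) =
      QuotientGroup.mk a
    rw [hopfHom_mk, hopfHom_mk]
    erw [← QuotientGroup.mk_mul, QuotientGroup.eq]
    rw [Subgroup.mem_subgroupOf]
    have key := inv_mem (key_lemma φ₁ φ₂ h₁ h₂ a.2.1)
    rw [mul_inv_rev, inv_inv] at key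
    simpa using key
  · -- Φ ∘ Ψ = id
    refine MonoidHom.ext fun p => ?_
    obtain ⟨x, y⟩ := p
    induction x using QuotientGroup.induction_on with | H a =>
    induction y using QuotientGroup.induction_on with | H b =>
    show Φ (Ψ (QuotientGroup.mk a, QuotientGroup.mk b)) = (QuotientGroup.mk a, QuotientGroup.mk b)
    have hΨ : Ψ (QuotientGroup.mk a, QuotientGroup.mk b) =
        hopfHom φ₁.ker _ fpInl (fun _ hx => mem_ker_inl φ₁ φ₂ hx) (QuotientGroup.mk a) *
        hopfHom φ₂.ker _ fpInr (fun _ hx => mem_ker_inr φ₁ φ₂ hx) (QuotientGroup.mk b) := rfl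
    rw [hΨ, hopfHom_mk, hopfHom_mk]
    erw [← QuotientGroup.mk_mul]
    refine Prod.ext ?_ ?_
    · show hopfHom _ φ₁.ker fpFst (fun _ hx => mem_ker_fst φ₁ φ₂ hx) (QuotientGroup.mk _) =
        QuotientGroup.mk a
      rw [hopfHom_mk]
      refine congrArg QuotientGroup.mk (Subtype.ext ?_)
      push_cast
      simp [map_mul]
    · show hopfHom _ φ₂.ker fpSnd (fun _ hx => mem_ker_snd φ₁ φ₂ hx) (QuotientGroup.mk _) =
        QuotientGroup.mk b
      rw [hopfHom_mk]
      refine congrArg QuotientGroup.mk (Subtype.ext ?_)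
      push_cast
      simp [map_mul]
end
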